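/- Let S', m' : ℝ → (0,∞) be continuous with ∫ₐᵇ μ(t)m'(t)dt = 1/S'(b) - 1/S'(a), let c : ℝ → ℝ be continuous, q_u, q_d ≥ 0, π1(x) = c(x) + q_d·μ(x), π2(x) = c(x) - q_u·μ(x), m(a,b) = ∫ₐᵇ m'(t)dt, and define C(a,b) = (1/m(a,b))·(∫ₐᵇ c(t)m'(t)dt + q_u/S'(a) + q_d/S'(b)) for a < b. Then ∂C/∂a (a,b) = (m'(a)/m(a,b))·(C(a,b) - π2(a)) and ∂C/∂b (a,b) = (m'(b)/m(a,b))·(π1(b) - C(a,b)). -/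
import Mathlib


open Real

lemma hdr' (f : ℝ → ℝ) (hf : Continuous f) (a b : ℝ) :
    HasDerivAt (fun y => ∫ t in a..y, f t) (f b) b :=
  intervalIntegral.integral_hasDerivAt_right (hf.intervalIntegrable _ _)
    (hf.stronglyMeasurableAtFilter _ _) hf.continuousAt

lemma hdl' (f : ℝ → ℝ) (hf : Continuous f) (a b : ℝ) :
    HasDerivAt (fun x => ∫ t in x..b, f t) (-f a) a :=
  intervalIntegral.integral_hasDerivAt_left (hf.intervalIntegrable _ _)
    (hf.stronglyMeasurableAtFilter _ _) hf.continuousAt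

theorem stmt7 (μ c S' m' : ℝ → ℝ)
    (hS'cont : Continuous S') (hm'cont : Continuous m')
    (hS'pos : ∀ x, 0 < S' x) (hm'pos : ∀ x, 0 < m' x)
    (hccont : Continuous c) (hμcont : Continuous μ)
    (qu qd : ℝ) (hqu : 0 ≤ qu) (hqd : 0 ≤ qd)
    (hcanon : ∀ a b : ℝ, (∫ t in a..b, μ t * m' t) = 1 / S' b - 1 / S' a)
    (π1 π2 : ℝ → ℝ)
    (hπ1 : ∀ x, π1 x = c x + qd * μ x) (hπ2 : ∀ x, π2 x = c x - qu * μ x)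
    (m : ℝ → ℝ → ℝ) (hm : ∀ a b, m a b = ∫ t in a..b, m' t)
    (C : ℝ → ℝ → ℝ)
    (hC : ∀ a b, C a b = (1 / m a b) *
        ((∫ t in a..b, c t * m' t) + qu / S' a + qd / S' b)) :
    ∀ a b : ℝ, a < b →
      HasDerivAt (fun x => C x b) ((m' a / m a b) * (C a b - π2 a)) a ∧
      HasDerivAt (fun y => C a y) ((m' b / m a b) * (π1 b - C a b)) b := by
  intro a b hab
  have hcm' : Continuous (fun t => c t * m' t) := hccont.mul hm'cont
  have hμm' : Continuous (fun t => μ t * m' t) := hμcont.mul hm'cont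
  have hM : 0 < ∫ t in a..b, m' t :=
    intervalIntegral.intervalIntegral_pos_of_pos (hm'cont.intervalIntegrable a b) hm'pos hab
  have hMne : (∫ t in a..b, m' t) ≠ 0 := ne_of_gt hM
  have hSane : S' a ≠ 0 := ne_of_gt (hS'pos a)
  have hSbne : S' b ≠ 0 := ne_of_gt (hS'pos b)
  constructor
  · -- derivative in a
    have hGa : HasDerivAt (fun x => ∫ t in x..b, m' t) (-m' a) a := hdl' m' hm'cont a b
    have hIa : HasDerivAt (fun x => ∫ t in x..b, c t * m' t) (-(c a * m' a)) a :=
      hdl' _ hcm' a b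
    have hSa : HasDerivAt (fun x => 1 / S' x) (μ a * m' a) a := by
      have h1 : HasDerivAt (fun x => 1 / S' b - ∫ t in x..b, μ t * m' t)
          (-(-(μ a * m' a))) a := (hdl' _ hμm' a b).const_sub _
      have heq : (fun x : ℝ => 1 / S' x) =
          fun x => 1 / S' b - ∫ t in x..b, μ t * m' t := by
        funext x; rw [hcanon x b]; ring
      rw [heq]
      simpa using h1
    have hF : HasDerivAt
        (fun x => (∫ t in x..b, m' t)⁻¹ *
          ((∫ t in x..b, c t * m' t) + qu * (1 / S' x) + qd / S' b))
        ((-(-m' a) / (∫ t in a..b, m' t) ^ 2) *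
            ((∫ t in a..b, c t * m' t) + qu * (1 / S' a) + qd / S' b)
          + (∫ t in a..b, m' t)⁻¹ *
            ((-(c a * m' a)) + qu * (μ a * m' a))) a := by
      exact (hGa.inv hMne).mul ((hIa.add (hSa.const_mul qu)).add_const _)
    have heq2 : (fun x => C x b) =
        fun x => (∫ t in x..b, m' t)⁻¹ *
          ((∫ t in x..b, c t * m' t) + qu * (1 / S' x) + qd / S' b) := by
      funext x; rw [hC x b, hm x b]; ring
    rw [heq2]
    convert hF using 1
    rw [hC a b, hπ2 a, hm a b]
    field_simp
    ring
  · -- derivative in b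
    have hGb : HasDerivAt (fun y => ∫ t in a..y, m' t) (m' b) b := hdr' m' hm'cont a b
    have hIb : HasDerivAt (fun y => ∫ t in a..y, c t * m' t) (c b * m' b) b :=
      hdr' _ hcm' a b
    have hSb : HasDerivAt (fun y => 1 / S' y) (μ b * m' b) b := by
      have h1 : HasDerivAt (fun y => (∫ t in a..y, μ t * m' t) + 1 / S' a)
          (μ b * m' b) b := (hdr' _ hμm' a b).add_const _
      have heq : (fun y : ℝ => 1 / S' y) =
          fun y => (∫ t in a..y, μ t * m' t) + 1 / S' a := by
        funext y; rw [hcanon a y]; ring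
      rw [heq]
      exact h1
    have hF : HasDerivAt
        (fun y => (∫ t in a..y, m' t)⁻¹ *
          ((∫ t in a..y, c t * m' t) + qu / S' a + qd * (1 / S' y)))
        ((-m' b / (∫ t in a..b, m' t) ^ 2) *
            ((∫ t in a..b, c t * m' t) + qu / S' a + qd * (1 / S' b))
          + (∫ t in a..b, m' t)⁻¹ *
            (c b * m' b + qd * (μ b * m' b))) b := by
      exact (hGb.inv hMne).mul (((hIb.add_const _).add (hSb.const_mul qd)))
    have heq2 : (fun y => C a y) =
        fun y => (∫ t in a..y, m' t)⁻¹ *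
          ((∫ t in a..y, c t * m' t) + qu / S' a + qd * (1 / S' y)) := by
      funext y; rw [hC a y, hm a y]; ring
    rw [heq2]
    convert hF using 1
    rw [hC a b, hπ1 b, hm a b]
    field_simp
    ring
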